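/- For every x ∈ (−1,0) ∪ (0,1), arctan((1−x²)/(2x)) ≤ (π/2)·(1−x). -/
import Mathlib

open scoped Real

lemma arctan_concave_Icc : ConcaveOn ℝ (Set.Icc (0:ℝ) 1) Real.arctan := by
  apply StrictConcaveOn.concaveOn
  apply StrictAntiOn.strictConcaveOn_of_deriv (convex_Icc 0 1)
    Real.continuous_arctan.continuousOn
  intro a ha b hb hab
  rw [Real.deriv_arctan]
  show (1:ℝ)/(1+b^2) < 1/(1+a^2)
  rw [interior_Icc] at ha hb
  have ha0 : (0:ℝ) < a := ha.1
  have : a ^ 2 < b ^ 2 := by nlinarith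
  apply div_lt_div_of_pos_left one_pos (by positivity)
  linarith

lemma pi_mul_le_arctan {x : ℝ} (h0 : 0 ≤ x) (h1 : x ≤ 1) :
    Real.pi / 4 * x ≤ Real.arctan x := by
  have h := arctan_concave_Icc.2
    (Set.mem_Icc.mpr ⟨le_refl 0, zero_le_one⟩)
    (Set.mem_Icc.mpr ⟨zero_le_one, le_refl 1⟩)
    (show (0:ℝ) ≤ 1 - x by linarith) h0 (show (1 - x) + x = 1 by ring)
  simp only [smul_eq_mul, mul_zero, mul_one, zero_add, Real.arctan_zero,
    Real.arctan_one] at h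
  linarith

/-- For every `x ∈ (−1,0) ∪ (0,1)`, `arctan((1−x²)/(2x)) ≤ (π/2)(1−x)`. -/
theorem arctan_le_pi_div_two_mul (x : ℝ)
    (hx : x ∈ Set.Ioo (-1 : ℝ) 0 ∪ Set.Ioo (0 : ℝ) 1) :
    Real.arctan ((1 - x ^ 2) / (2 * x)) ≤ Real.pi / 2 * (1 - x) := by
  rcases hx with ⟨h1, h2⟩ | ⟨h1, h2⟩
  · -- x < 0 : LHS < π/2 ≤ RHS
    have := Real.arctan_lt_pi_div_two ((1 - x ^ 2) / (2 * x))
    nlinarith [Real.pi_pos]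
  · -- 0 < x < 1
    have hx2 : (0:ℝ) < 1 - x ^ 2 := by nlinarith
    have hpos : 0 < 2 * x / (1 - x ^ 2) := by positivity
    have key : (1 - x ^ 2) / (2 * x) = (2 * x / (1 - x ^ 2))⁻¹ := by
      rw [inv_div]
    rw [key, Real.arctan_inv_of_pos hpos, ← Real.two_mul_arctan (by linarith) h2]
    have := pi_mul_le_arctan h1.le h2.le
    linarith
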